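/- With G_S as in the series-parallel construction (path A with weights 2α,1,1,2α; 2n five-cycles with weights s_j,0,α,α,0 attached to hubs b', b'' of weight α each), if the competitive diffusion game (2n+4, G_S, w_S) has a pure Nash equilibrium, then there exists S' ⊆ [2n] with Σ_{j∈S'} s_j = Σ_{j∈[2n]∖S'} s_j = α, where 2α = Σ_{j=1}^{2n} s_j. -/

import Mathlib

open Classical

noncomputable section

/-- State labels in the competitive diffusion game:
`none` = free (undominated, non-neutral), `some none` = neutral,
`some (some i)` = dominated by player `i`. -/
def initLabel {V : Type*} {k : ℕ} (s : Fin k → V) (v : V) : Option (Option (Fin k)) :=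
  if h : ∃! i, s i = v then some (some h.choose)
  else if _h : (∃ i, s i = v) then some none
  else none

/-- One diffusion step: a free vertex adjacent to vertices dominated by exactly one
player becomes dominated by that player; if adjacent to vertices dominated by two or
more players it becomes neutral. -/
def stepLabel {V : Type*} {k : ℕ} (G : SimpleGraph V) (L : V → Option (Option (Fin k)))
    (v : V) : Option (Option (Fin k)) :=
  match L v with
  | some x => some x
  | none =>
    if h : ∃! i : Fin k, ∃ u, G.Adj u v ∧ L u = some (some i) then some (some h.choose)
    else if _h : (∃ i : Fin k, ∃ u, G.Adj u v ∧ L u = some (some i)) then some none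
    else none

/-- The final state of the diffusion process (it stabilizes after `|V|` steps). -/
def finalLabel {V : Type*} [Fintype V] {k : ℕ} (G : SimpleGraph V) (s : Fin k → V) :
    V → Option (Option (Fin k)) :=
  (fun L v => stepLabel G L v)^[Fintype.card V] (initLabel s)

/-- The utility of player `i`: total weight of the vertices `i` dominates at the end. -/
def utility {V : Type*} [Fintype V] {k : ℕ} (G : SimpleGraph V) (w : V → ℤ)
    (s : Fin k → V) (i : Fin k) : ℤ :=
  ∑ v ∈ Finset.univ.filter (fun v => finalLabel G s v = some (some i)), w v

/-- `s` is a pure Nash equilibrium of the competitive diffusion game `(k, G, w)`. -/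
def isNash {V : Type*} [Fintype V] [DecidableEq V] {k : ℕ} (G : SimpleGraph V) (w : V → ℤ)
    (s : Fin k → V) : Prop :=
  ∀ (i : Fin k) (v' : V), utility G w (Function.update s i v') i ≤ utility G w s i

/-- `G` with weights `w` admits `κ` players with boundary `t`: some pure Nash
equilibrium `s` of `(κ, G, w)` satisfies `ν(s) ≤ t ≤ μ(s)`. -/
def admitsWith {V : Type*} [Fintype V] [DecidableEq V] (G : SimpleGraph V) (w : V → ℤ)
    (κ : ℕ) (t : ℤ) : Prop :=
  ∃ s : Fin κ → V, isNash G w s ∧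
    (∀ v : V, utility G w (Fin.snoc s v) (Fin.last κ) ≤ t) ∧
    (∀ i : Fin κ, t ≤ utility G w s i)

/-- The path on `n` vertices. -/
def pathGraph (n : ℕ) : SimpleGraph (Fin n) :=
  SimpleGraph.fromRel (fun i j => (i : ℕ) + 1 = (j : ℕ))

/-- The unweighted path on `n` vertices admits `κ` players with boundary `t`. -/
def pathAdmits (n κ t : ℕ) : Prop :=
  admitsWith (pathGraph n) (fun _ => (1 : ℤ)) κ (t : ℤ)

/-- Vertices of the series-parallel graph `G_S`: the 4-path `A` (left), the `2n`
five-cycles (pairs `(j, r)` with `r = 0, …, 4` standing for `b_{j,1}, …, b_{j,5}`),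
and the two hubs `b' = false`, `b'' = true`. -/
abbrev VGS (n : ℕ) := Fin 4 ⊕ ((Fin (2 * n) × Fin 5) ⊕ Bool)

/-- Generating relation for `G_S`: the path `a_1a_2a_3a_4`, the five-cycles, `b'`
adjacent to every `b_{j,2}`, and `b''` adjacent to every `b_{j,5}`. -/
def relGS (n : ℕ) : VGS n → VGS n → Prop := fun x y =>
  match x, y with
  | Sum.inl i, Sum.inl i' => (i : ℕ) + 1 = (i' : ℕ)
  | Sum.inr (Sum.inl (j, r)), Sum.inr (Sum.inl (j', r')) =>
      j = j' ∧ ((r : ℕ) + 1) % 5 = (r' : ℕ)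
  | Sum.inr (Sum.inr false), Sum.inr (Sum.inl (_, r)) => (r : ℕ) = 1
  | Sum.inr (Sum.inr true), Sum.inr (Sum.inl (_, r)) => (r : ℕ) = 4
  | _, _ => False

/-- The series-parallel graph `G_S`. -/
def GGS (n : ℕ) : SimpleGraph (VGS n) := SimpleGraph.fromRel (relGS n)

/-- The weights of `G_S`: `2α, 1, 1, 2α` on the path, `s_j, 0, α, α, 0` on the
`j`-th five-cycle, and `α` on each of `b'`, `b''`. -/
def wGS (n : ℕ) (S : Fin (2 * n) → ℤ) (α : ℤ) : VGS n → ℤ := fun v =>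
  match v with
  | Sum.inl i => if (i : ℕ) = 0 ∨ (i : ℕ) = 3 then 2 * α else 1
  | Sum.inr (Sum.inl (j, r)) =>
      if (r : ℕ) = 0 then S j else if (r : ℕ) = 2 ∨ (r : ℕ) = 3 then α else 0
  | Sum.inr (Sum.inr _) => α

/- ===== Generic diffusion machinery ===== -/

section Machinery

variable {V : Type*} {k : ℕ} (G : SimpleGraph V) (s : Fin k → V)

/-- The label after `t` steps. -/
def labelAt (t : ℕ) : V → Option (Option (Fin k)) :=
  (fun L v => stepLabel G L v)^[t] (initLabel s)

lemma labelAt_zero : labelAt G s 0 = initLabel s := rfl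

lemma labelAt_succ (t : ℕ) (v : V) :
    labelAt G s (t + 1) v = stepLabel G (labelAt G s t) v := by
  simp [labelAt, Function.iterate_succ_apply']

lemma stepLabel_of_some {L : V → Option (Option (Fin k))} {v : V} {x : Option (Fin k)}
    (h : L v = some x) : stepLabel G L v = some x := by
  unfold stepLabel; rw [h]

lemma labelAt_persist {t : ℕ} {v : V} {x : Option (Fin k)}
    (h : labelAt G s t v = some x) : ∀ m, labelAt G s (t + m) v = some x := by
  intro m
  induction m with
  | zero => exact h
  | succ m ih =>
    rw [show t + (m+1) = (t + m) + 1 by ring, labelAt_succ]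
    exact stepLabel_of_some G ih

lemma labelAt_mono {t t' : ℕ} {v : V} {x : Option (Fin k)} (htt : t ≤ t')
    (h : labelAt G s t v = some x) : labelAt G s t' v = some x := by
  obtain ⟨m, rfl⟩ := Nat.exists_eq_add_of_le htt
  exact labelAt_persist G s h m

lemma finalLabel_eq_labelAt [Fintype V] :
    finalLabel G s = labelAt G s (Fintype.card V) := rfl

lemma finalLabel_of_labelAt [Fintype V] {t : ℕ} {v : V} {x : Option (Fin k)}
    (ht : t ≤ Fintype.card V) (h : labelAt G s t v = some x) :
    finalLabel G s v = some x := by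
  rw [finalLabel_eq_labelAt]; exact labelAt_mono G s ht h

lemma initLabel_of_unique {i : Fin k} {v : V} (hi : s i = v)
    (huniq : ∀ j, s j = v → j = i) : initLabel s v = some (some i) := by
  have h : ∃! j, s j = v := ⟨i, hi, huniq⟩
  have hc : h.choose = i := huniq _ h.choose_spec.1
  rw [initLabel, dif_pos h, hc]

lemma initLabel_of_none {v : V} (h : ∀ j, s j ≠ v) : initLabel s v = none := by
  rw [initLabel, dif_neg, dif_neg]
  · rintro ⟨j, hj⟩; exact h j hj
  · rintro ⟨j, hj, -⟩; exact h j hj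

lemma initLabel_of_two {i j : Fin k} {v : V} (hi : s i = v) (hj : s j = v)
    (hij : i ≠ j) : initLabel s v = some none := by
  rw [initLabel, dif_neg, dif_pos ⟨i, hi⟩]
  rintro ⟨m, -, hm⟩
  exact hij ((hm i hi).trans (hm j hj).symm)

lemma stepLabel_of_dom {L : V → Option (Option (Fin k))} {v u : V} {i : Fin k}
    (hv : L v = none) (hadj : G.Adj u v) (hu : L u = some (some i))
    (huniq : ∀ (i' : Fin k) (u' : V), G.Adj u' v → L u' = some (some i') → i' = i) :
    stepLabel G L v = some (some i) := by
  have h : ∃! i' : Fin k, ∃ u', G.Adj u' v ∧ L u' = some (some i') := by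
    refine ⟨i, ⟨u, hadj, hu⟩, ?_⟩
    rintro i' ⟨u', hadj', hu'⟩
    exact huniq i' u' hadj' hu'
  unfold stepLabel
  rw [hv, dif_pos h]
  obtain ⟨u', hadj', hu'⟩ := h.choose_spec.1
  rw [huniq _ u' hadj' hu']

lemma stepLabel_of_neutral {L : V → Option (Option (Fin k))} {v u u' : V} {i i' : Fin k}
    (hv : L v = none) (hadj : G.Adj u v) (hu : L u = some (some i))
    (hadj' : G.Adj u' v) (hu' : L u' = some (some i')) (hii : i ≠ i') :
    stepLabel G L v = some none := by
  unfold stepLabel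
  rw [hv, dif_neg, dif_pos ⟨i, u, hadj, hu⟩]
  rintro ⟨m, -, hm⟩
  exact hii ((hm i ⟨u, hadj, hu⟩).trans (hm i' ⟨u', hadj', hu'⟩).symm)

lemma stepLabel_of_isolated {L : V → Option (Option (Fin k))} {v : V}
    (hv : L v = none)
    (h : ∀ (i : Fin k) (u : V), G.Adj u v → L u ≠ some (some i)) :
    stepLabel G L v = none := by
  unfold stepLabel
  rw [hv, dif_neg, dif_neg]
  · rintro ⟨i, u, hadj, hu⟩; exact h i u hadj hu
  · rintro ⟨i, ⟨u, hadj, hu⟩, -⟩; exact h i u hadj hu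

lemma initLabel_inv {v : V} {i : Fin k} (h : initLabel s v = some (some i)) :
    s i = v := by
  rw [initLabel] at h
  split_ifs at h with h1 h2
  · have hc : h1.choose = i := by simpa using h
    have h2 : s h1.choose = v := h1.choose_spec.1
    rwa [hc] at h2
  · simp at h

lemma stepLabel_inv {L : V → Option (Option (Fin k))} {v : V} {i : Fin k}
    (h : stepLabel G L v = some (some i)) :
    L v = some (some i) ∨ (∃ u, G.Adj u v ∧ L u = some (some i)) := by
  rcases hLv : L v with _ | x
  · unfold stepLabel at h
    rw [hLv] at h
    split_ifs at h with h1 h2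
    · have hc : h1.choose = i := by simpa using h
      right
      have h2 : ∃ u, G.Adj u v ∧ L u = some (some h1.choose) := h1.choose_spec.1
      rwa [hc] at h2
    · simp at h
  · unfold stepLabel at h
    rw [hLv] at h
    have h2 : (some x : Option (Option (Fin k))) = some (some i) := h
    left; exact h2

/-- Trace-back: a vertex dominated by `i` is connected to `s i` by a walk of
vertices dominated by `i`. -/
lemma labelAt_trace {t : ℕ} {v : V} {i : Fin k}
    (h : labelAt G s t v = some (some i)) :
    ∃ p : G.Walk (s i) v, ∀ u ∈ p.support, ∃ t' ≤ t, labelAt G s t' u = some (some i) := by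
  induction t generalizing v with
  | zero =>
    have hv : s i = v := initLabel_inv s h
    subst hv
    exact ⟨SimpleGraph.Walk.nil, by intro u hu; simp at hu; subst hu; exact ⟨0, le_refl _, h⟩⟩
  | succ t ih =>
    rw [labelAt_succ] at h
    rcases stepLabel_inv G h with h' | ⟨u, hadj, hu⟩
    · obtain ⟨p, hp⟩ := ih h'
      exact ⟨p, fun u hu => by obtain ⟨t', ht', hl⟩ := hp u hu; exact ⟨t', le_trans ht' (Nat.le_succ t), hl⟩⟩
    · obtain ⟨p, hp⟩ := ih hu
      refine ⟨p.concat hadj, ?_⟩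
      intro u' hu'
      rw [SimpleGraph.Walk.support_concat, List.mem_append,
        List.mem_singleton] at hu'
      rcases hu' with hu' | rfl
      · obtain ⟨t', ht', hl⟩ := hp u' hu'
        exact ⟨t', le_trans ht' (Nat.le_succ t), hl⟩
      · exact ⟨t + 1, le_refl _, by rw [labelAt_succ]; exact h⟩

end Machinery
/- ===== Utility lemmas ===== -/

set_option linter.unusedSectionVars false

section Utility

variable {V : Type*} [Fintype V] [DecidableEq V] {k : ℕ} (G : SimpleGraph V)
  (w : V → ℤ) (s : Fin k → V)

lemma final_trace {v : V} {i : Fin k} (h : finalLabel G s v = some (some i)) :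
    ∃ p : G.Walk (s i) v, ∀ u ∈ p.support, finalLabel G s u = some (some i) := by
  obtain ⟨p, hp⟩ := labelAt_trace G s (h : labelAt G s (Fintype.card V) v = some (some i))
  refine ⟨p, fun u hu => ?_⟩
  obtain ⟨t', ht', hl⟩ := hp u hu
  exact finalLabel_of_labelAt G s ht' hl

lemma utility_ge (hw : ∀ v, 0 ≤ w v) {i : Fin k} (E : Finset V)
    (hE : ∀ v ∈ E, finalLabel G s v = some (some i)) :
    ∑ v ∈ E, w v ≤ utility G w s i := by
  apply Finset.sum_le_sum_of_subset_of_nonneg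
  · intro v hv
    simp only [Finset.mem_filter, Finset.mem_univ, true_and]
    exact hE v hv
  · intro v _ _; exact hw v

lemma utility_le (hw : ∀ v, 0 ≤ w v) {i : Fin k} (E : Finset V)
    (hE : ∀ v, finalLabel G s v = some (some i) → v ∈ E) :
    utility G w s i ≤ ∑ v ∈ E, w v := by
  apply Finset.sum_le_sum_of_subset_of_nonneg
  · intro v hv
    simp only [Finset.mem_filter, Finset.mem_univ, true_and] at hv
    exact hE v hv
  · intro v _ _; exact hw v

lemma utility_sum_eq (I : Finset (Fin k)) :
    ∑ i ∈ I, utility G w s i =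
      ∑ v ∈ I.biUnion (fun i => Finset.univ.filter
        (fun v => finalLabel G s v = some (some i))), w v := by
  have hdisj : (↑I : Set (Fin k)).PairwiseDisjoint (fun i => Finset.univ.filter
      (fun v => finalLabel G s v = some (some i))) := by
    intro i _ j _ hij
    simp only [Function.onFun]
    rw [Finset.disjoint_left]
    intro v hvi hvj
    simp only [Finset.mem_filter] at hvi hvj
    exact hij (by
      have := hvi.2.symm.trans hvj.2
      simpa using this)
  rw [Finset.sum_biUnion hdisj]
  rfl

lemma utility_sum_le (hw : ∀ v, 0 ≤ w v) (I : Finset (Fin k)) (T : Finset V)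
    (hT : ∀ i ∈ I, ∀ v, finalLabel G s v = some (some i) → v ∈ T) :
    ∑ i ∈ I, utility G w s i ≤ ∑ v ∈ T, w v := by
  rw [utility_sum_eq]
  apply Finset.sum_le_sum_of_subset_of_nonneg
  · intro v hv
    simp only [Finset.mem_biUnion, Finset.mem_filter] at hv
    obtain ⟨i, hi, -, hvi⟩ := hv
    exact hT i hi v hvi
  · intro v _ _; exact hw v

lemma nash_dev_ge (hN : isNash G w s) (hw : ∀ v, 0 ≤ w v) (i : Fin k) (v : V)
    (hfree : ∀ j, j ≠ i → s j ≠ v) : w v ≤ utility G w s i := by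
  have hup : Function.update s i v i = v := Function.update_self i v s
  have hinit : initLabel (Function.update s i v) v = some (some i) := by
    apply initLabel_of_unique _ hup
    intro j hj
    by_contra hji
    rw [Function.update_of_ne hji] at hj
    exact hfree j hji hj
  have hfin : finalLabel G (Function.update s i v) v = some (some i) :=
    finalLabel_of_labelAt G _ (Nat.zero_le _) hinit
  calc w v = ∑ u ∈ ({v} : Finset V), w u := by rw [Finset.sum_singleton]
    _ ≤ utility G w (Function.update s i v) i := by
        apply utility_ge G w _ hw
        intro u hu
        rw [Finset.mem_singleton] at hu
        subst hu; exact hfin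
    _ ≤ utility G w s i := hN i v

lemma utility_contested {i j : Fin k} (hij : i ≠ j) (h : s i = s j) :
    utility G w s i = 0 := by
  rw [utility, Finset.sum_eq_zero]
  intro v hv
  simp only [Finset.mem_filter, Finset.mem_univ, true_and] at hv
  exfalso
  obtain ⟨p, hp⟩ := final_trace G s hv
  have hsi : finalLabel G s (s i) = some (some i) := hp (s i) p.start_mem_support
  have hneu : finalLabel G s (s i) = some none :=
    finalLabel_of_labelAt G s (Nat.zero_le _) (initLabel_of_two s rfl h.symm hij)
  rw [hsi] at hneu
  exact absurd hneu (by simp)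

end Utility
set_option linter.unusedTactic false
set_option linter.unnecessarySeqFocus false

/- ===== Specific lemmas about G_S ===== -/

section GSfacts

variable {n : ℕ}

lemma ggs_adj {u v : VGS n} : (GGS n).Adj u v ↔ u ≠ v ∧ (relGS n u v ∨ relGS n v u) := by
  rw [GGS]; exact SimpleGraph.fromRel_adj _ u v

lemma adj_a0_iff (u : VGS n) :
    (GGS n).Adj u (Sum.inl 0) ↔ u = Sum.inl 1 := by
  rw [ggs_adj]
  constructor
  · rintro ⟨hne, h | h⟩ <;>
    · rcases u with i | (⟨j, r⟩ | b) <;> simp [relGS] at h ⊢ <;>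
        (try exact absurd h (by omega)) <;> (try exact Fin.ext (by omega))
  · rintro rfl
    exact ⟨by simp, Or.inr rfl⟩

lemma adj_a1_iff (u : VGS n) :
    (GGS n).Adj u (Sum.inl 1) ↔ u = Sum.inl 0 ∨ u = Sum.inl 2 := by
  rw [ggs_adj]
  constructor
  · rintro ⟨hne, h | h⟩ <;>
    · rcases u with i | (⟨j, r⟩ | b) <;> simp [relGS] at h ⊢ <;> omega
  · rintro (rfl | rfl)
    · exact ⟨by simp, Or.inl rfl⟩
    · exact ⟨by simp, Or.inr rfl⟩

lemma adj_a2_iff (u : VGS n) :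
    (GGS n).Adj u (Sum.inl 2) ↔ u = Sum.inl 1 ∨ u = Sum.inl 3 := by
  rw [ggs_adj]
  constructor
  · rintro ⟨hne, h | h⟩ <;>
    · rcases u with i | (⟨j, r⟩ | b) <;> simp [relGS] at h ⊢ <;> omega
  · rintro (rfl | rfl)
    · exact ⟨by simp, Or.inl rfl⟩
    · exact ⟨by simp, Or.inr rfl⟩

lemma adj_a3_iff (u : VGS n) :
    (GGS n).Adj u (Sum.inl 3) ↔ u = Sum.inl 2 := by
  rw [ggs_adj]
  constructor
  · rintro ⟨hne, h | h⟩ <;>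
    · rcases u with i | (⟨j, r⟩ | b) <;> simp [relGS] at h ⊢ <;>
        (try exact absurd h (by omega)) <;> (try exact Fin.ext (by omega)) <;> omega
  · rintro rfl
    exact ⟨by simp, Or.inl rfl⟩

lemma adj_isLeft {u v : VGS n} (h : (GGS n).Adj u v) : u.isLeft = v.isLeft := by
  rw [ggs_adj] at h
  obtain ⟨-, h | h⟩ := h <;>
    rcases u with i | (⟨j, r⟩ | b) <;> rcases v with i' | (⟨j', r'⟩ | b') <;>
      simp [relGS] at h ⊢ <;> (try cases b) <;> (try cases b') <;> simp [relGS] at h ⊢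

lemma walk_isLeft {u v : VGS n} (p : (GGS n).Walk u v) : u.isLeft = v.isLeft := by
  induction p with
  | nil => rfl
  | cons h _ ih => exact (adj_isLeft h).trans ih

lemma adj_cyc {j : Fin (2*n)} {r : Fin 5} {u : VGS n}
    (h : (GGS n).Adj (Sum.inr (Sum.inl (j, r))) u) :
    (∃ r', u = Sum.inr (Sum.inl (j, r'))) ∨ u = Sum.inr (Sum.inr false) ∨
      u = Sum.inr (Sum.inr true) := by
  rw [ggs_adj] at h
  obtain ⟨-, h | h⟩ := h
  · rcases u with i' | (⟨j', r'⟩ | b')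
    · exact absurd h (by simp [relGS])
    · simp only [relGS] at h
      exact Or.inl ⟨r', by rw [h.1]⟩
    · exact absurd h (by cases b' <;> simp [relGS])
  · rcases u with i' | (⟨j', r'⟩ | b')
    · exact absurd h (by simp [relGS])
    · simp only [relGS] at h
      exact Or.inl ⟨r', by rw [← h.1]⟩
    · cases b'
      · exact Or.inr (Or.inl rfl)
      · exact Or.inr (Or.inr rfl)

/-- Any walk leaving a five-cycle passes through a hub. -/
lemma cyc_cut {j : Fin (2*n)} {u v : VGS n} (p : (GGS n).Walk u v)
    (hu : ∃ r, u = Sum.inr (Sum.inl (j, r)))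
    (hv : ∀ r, v ≠ Sum.inr (Sum.inl (j, r))) :
    ∃ h ∈ p.support, h = Sum.inr (Sum.inr false) ∨ h = Sum.inr (Sum.inr true) := by
  induction p with
  | nil => obtain ⟨r, rfl⟩ := hu; exact absurd rfl (hv r)
  | @cons a b c hadj p ih =>
    obtain ⟨r, rfl⟩ := hu
    rcases adj_cyc hadj with ⟨r', rfl⟩ | hb | hb
    · obtain ⟨h, hh, hf⟩ := ih ⟨r', rfl⟩ hv
      exact ⟨h, by simp [hh], hf⟩
    · exact ⟨b, by simp, Or.inl hb⟩
    · exact ⟨b, by simp, Or.inr hb⟩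

end GSfacts
/- ===== Weights and sums ===== -/

section Weights

variable {n : ℕ} {S : Fin (2*n) → ℤ} {α : ℤ}

lemma wGS_a0 : wGS n S α (Sum.inl 0) = 2*α := rfl
lemma wGS_a1 : wGS n S α (Sum.inl 1) = 1 := rfl
lemma wGS_a2 : wGS n S α (Sum.inl 2) = 1 := rfl
lemma wGS_a3 : wGS n S α (Sum.inl 3) = 2*α := rfl
lemma wGS_c0 (j : Fin (2*n)) : wGS n S α (Sum.inr (Sum.inl (j, 0))) = S j := rfl
lemma wGS_c1 (j : Fin (2*n)) : wGS n S α (Sum.inr (Sum.inl (j, 1))) = 0 := rfl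
lemma wGS_c2 (j : Fin (2*n)) : wGS n S α (Sum.inr (Sum.inl (j, 2))) = α := rfl
lemma wGS_c3 (j : Fin (2*n)) : wGS n S α (Sum.inr (Sum.inl (j, 3))) = α := rfl
lemma wGS_c4 (j : Fin (2*n)) : wGS n S α (Sum.inr (Sum.inl (j, 4))) = 0 := rfl
lemma wGS_hub (b : Bool) : wGS n S α (Sum.inr (Sum.inr b)) = α := rfl

lemma wGS_nonneg (hα : 0 ≤ α) (hS : ∀ j, 0 < S j) (v : VGS n) : 0 ≤ wGS n S α v := by
  rcases v with i | (⟨j, r⟩ | b)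
  · show (0:ℤ) ≤ if (i : ℕ) = 0 ∨ (i : ℕ) = 3 then 2*α else 1
    split_ifs <;> omega
  · show (0:ℤ) ≤ if (r : ℕ) = 0 then S j else if (r : ℕ) = 2 ∨ (r : ℕ) = 3 then α else 0
    have := hS j
    split_ifs <;> omega
  · exact hα

lemma sum_wGS (hsum : ∑ j, S j = 2*α) :
    ∑ v : VGS n, wGS n S α v = (4*(n:ℤ)+8)*α + 2 := by
  rw [Fintype.sum_sum_type, Fintype.sum_sum_type, Fintype.sum_prod_type]
  have h4 : ∑ i : Fin 4, wGS n S α (Sum.inl i) = 4*α + 2 := by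
    rw [Fin.sum_univ_four, wGS_a0, wGS_a1, wGS_a2, wGS_a3]; ring
  have h5 : ∀ j : Fin (2*n), ∑ r : Fin 5, wGS n S α (Sum.inr (Sum.inl (j, r)))
      = S j + 2*α := by
    intro j
    rw [Fin.sum_univ_five, wGS_c0, wGS_c1, wGS_c2, wGS_c3, wGS_c4]; ring
  have hc : ∑ j : Fin (2*n), ∑ r : Fin 5, wGS n S α (Sum.inr (Sum.inl (j, r)))
      = 2*α + 4*(n:ℤ)*α := by
    simp only [h5]
    rw [Finset.sum_add_distrib, hsum, Finset.sum_const, Finset.card_univ,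
      Fintype.card_fin, nsmul_eq_mul]
    push_cast; ring
  have hb : ∑ b : Bool, wGS n S α (Sum.inr (Sum.inr b)) = 2*α := by
    rw [Fintype.sum_bool, wGS_hub, wGS_hub]; ring
  rw [h4, hc, hb]; ring

/-- The non-path part of `G_S` as a finset. -/
def RestF (n : ℕ) : Finset (VGS n) :=
  Finset.univ.image Sum.inr

lemma mem_RestF {v : VGS n} (h : v.isRight) : v ∈ RestF n := by
  rcases v with i | x
  · simp at h
  · simp [RestF]

lemma sum_RestF (hsum : ∑ j, S j = 2*α) :
    ∑ v ∈ RestF n, wGS n S α v = (4*(n:ℤ)+4)*α := by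
  rw [RestF, Finset.sum_image (by intro x _ y _ h; exact Sum.inr_injective h)]
  rw [Fintype.sum_sum_type, Fintype.sum_prod_type]
  have h5 : ∀ j : Fin (2*n), ∑ r : Fin 5, wGS n S α (Sum.inr (Sum.inl (j, r)))
      = S j + 2*α := by
    intro j
    rw [Fin.sum_univ_five, wGS_c0, wGS_c1, wGS_c2, wGS_c3, wGS_c4]; ring
  have hc : ∑ j : Fin (2*n), ∑ r : Fin 5, wGS n S α (Sum.inr (Sum.inl (j, r)))
      = 2*α + 4*(n:ℤ)*α := by
    simp only [h5]
    rw [Finset.sum_add_distrib, hsum, Finset.sum_const, Finset.card_univ,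
      Fintype.card_fin, nsmul_eq_mul]
    push_cast; ring
  have hb : ∑ b : Bool, wGS n S α (Sum.inr (Sum.inr b)) = 2*α := by
    rw [Fintype.sum_bool, wGS_hub, wGS_hub]; ring
  rw [hc, hb]; ring

lemma card_VGS : Fintype.card (VGS n) = 10*n + 6 := by
  simp [VGS, Fintype.card_sum, Fintype.card_prod]
  ring

end Weights
/- ===== Capture lemmas ===== -/

section Capture

set_option linter.unusedSectionVars false

variable {V : Type*} [Fintype V] [DecidableEq V] {k : ℕ} (G : SimpleGraph V) (s : Fin k → V)

lemma final_of_occ {v : V} {p : Fin k} (hpv : s p = v)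
    (huniq : ∀ j, s j = v → j = p) : finalLabel G s v = some (some p) :=
  finalLabel_of_labelAt G s (Nat.zero_le _) (initLabel_of_unique s hpv huniq)

lemma final_capture_one {v u : V} {p : Fin k}
    (hv : ∀ j, s j ≠ v) (hpu : s p = u) (hpuniq : ∀ j, s j = u → j = p)
    (hadj : G.Adj u v) (hnbr : ∀ x, G.Adj x v → x = u) :
    finalLabel G s v = some (some p) := by
  have h0 : labelAt G s 0 v = none := initLabel_of_none s hv
  have hu0 : labelAt G s 0 u = some (some p) := initLabel_of_unique s hpu hpuniq
  have h1 : labelAt G s 1 v = some (some p) := by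
    rw [labelAt_succ]
    refine stepLabel_of_dom G h0 hadj hu0 ?_
    intro i' u' hadj' hu'
    rw [hnbr u' hadj'] at hu'
    exact hpuniq i' (initLabel_inv s hu')
  have : Nonempty V := ⟨v⟩
  have hc : 1 ≤ Fintype.card V := Fintype.card_pos
  exact finalLabel_of_labelAt G s hc h1

lemma final_capture_two {v u u' : V} {p : Fin k}
    (hv : ∀ j, s j ≠ v) (hpu : s p = u) (hpuniq : ∀ j, s j = u → j = p)
    (hadj : G.Adj u v) (hnbr : ∀ x, G.Adj x v → x = u ∨ x = u')
    (hu' : ∀ j, s j ≠ u') :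
    finalLabel G s v = some (some p) := by
  have h0 : labelAt G s 0 v = none := initLabel_of_none s hv
  have hu0 : labelAt G s 0 u = some (some p) := initLabel_of_unique s hpu hpuniq
  have h1 : labelAt G s 1 v = some (some p) := by
    rw [labelAt_succ]
    refine stepLabel_of_dom G h0 hadj hu0 ?_
    intro i' x hadj' hx
    rcases hnbr x hadj' with rfl | rfl
    · exact hpuniq i' (initLabel_inv s hx)
    · rw [labelAt_zero, initLabel_of_none s hu'] at hx; exact absurd hx (by simp)
  have : Nonempty V := ⟨v⟩
  have hc : 1 ≤ Fintype.card V := Fintype.card_pos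
  exact finalLabel_of_labelAt G s hc h1

lemma final_neutral_two {v u u' : V} {p q : Fin k}
    (hv : ∀ j, s j ≠ v) (hadj : G.Adj u v) (hadj' : G.Adj u' v)
    (hpu : s p = u) (hpuniq : ∀ j, s j = u → j = p)
    (hqu : s q = u') (hquniq : ∀ j, s j = u' → j = q) (hpq : p ≠ q) :
    finalLabel G s v = some none := by
  have h0 : labelAt G s 0 v = none := initLabel_of_none s hv
  have h1 : labelAt G s 1 v = some none := by
    rw [labelAt_succ]
    exact stepLabel_of_neutral G h0 hadj (initLabel_of_unique s hpu hpuniq)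
      hadj' (initLabel_of_unique s hqu hquniq) hpq
  have : Nonempty V := ⟨v⟩
  have hc : 1 ≤ Fintype.card V := Fintype.card_pos
  exact finalLabel_of_labelAt G s hc h1

end Capture
/- ===== Game lemmas for G_S ===== -/

section Game

set_option linter.unusedSectionVars false

variable {n : ℕ} {S : Fin (2*n) → ℤ} {α : ℤ} {s : Fin (2*n+4) → VGS n}

/-- There is always a free spot of weight `α`. -/
lemma spot_free (hn : 1 ≤ n) (s : Fin (2*n+4) → VGS n) (i : Fin (2*n+4)) :
    ∃ v : VGS n, (∀ j, j ≠ i → s j ≠ v) ∧ wGS n S α v = α := by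
  classical
  let f : Fin (2*n) ⊕ (Fin (2*n) ⊕ Bool) → VGS n := fun x =>
    match x with
    | .inl j => Sum.inr (Sum.inl (j, 2))
    | .inr (.inl j) => Sum.inr (Sum.inl (j, 3))
    | .inr (.inr b) => Sum.inr (Sum.inr b)
  have hf : Function.Injective f := by
    intro x y hxy
    rcases x with j | (j | b) <;> rcases y with j' | (j' | b') <;>
      simp [f] at hxy <;> simp_all
  let Fs : Finset (VGS n) := Finset.univ.map ⟨f, hf⟩
  have hcard : Fs.card = 4*n + 2 := by
    simp [Fs, Finset.card_map]
    ring
  have hex : ∃ v ∈ Fs, ∀ j, j ≠ i → s j ≠ v := by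
    by_contra hcon
    push_neg at hcon
    have hsub : Fs ⊆ (Finset.univ.erase i).image s := by
      intro v hv
      obtain ⟨j, hji, hj⟩ := hcon v hv
      exact Finset.mem_image.mpr ⟨j, Finset.mem_erase.mpr ⟨hji, Finset.mem_univ j⟩, hj⟩
    have h1 := Finset.card_le_card hsub
    have h2 := Finset.card_image_le (f := s) (s := Finset.univ.erase i)
    have h3 : (Finset.univ.erase i).card = 2*n + 3 := by
      rw [Finset.card_erase_of_mem (Finset.mem_univ i)]
      simp
    rw [hcard] at h1
    rw [h3] at h2
    omega
  obtain ⟨v, hvFs, hvfree⟩ := hex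
  refine ⟨v, hvfree, ?_⟩
  obtain ⟨x, -, rfl⟩ := Finset.mem_map.mp hvFs
  rcases x with j | (j | b)
  · exact wGS_c2 j
  · exact wGS_c3 j
  · exact wGS_hub b

lemma U_ge_alpha (hn : 1 ≤ n) (hpos : ∀ j, 0 < S j) (hα0 : 0 ≤ α)
    (hN : isNash (GGS n) (wGS n S α) s) (i : Fin (2*n+4)) :
    α ≤ utility (GGS n) (wGS n S α) s i := by
  obtain ⟨v, hfree, hw⟩ := spot_free (S := S) (α := α) hn s i
  have := nash_dev_ge (GGS n) (wGS n S α) s hN (wGS_nonneg hα0 hpos) i v hfree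
  rwa [hw] at this

lemma s_inj (hn : 1 ≤ n) (hpos : ∀ j, 0 < S j) (hα2 : 2 ≤ α)
    (hN : isNash (GGS n) (wGS n S α) s) : Function.Injective s := by
  intro i j hij
  by_contra hne
  have h0 := utility_contested (GGS n) (wGS n S α) s hne hij
  have h1 := U_ge_alpha hn hpos (by omega) hN i
  rw [h0] at h1
  omega

lemma sum_U_le_total (hpos : ∀ j, 0 < S j) (hα0 : 0 ≤ α) (hsum : ∑ j, S j = 2*α) :
    ∑ i, utility (GGS n) (wGS n S α) s i ≤ (4*(n:ℤ)+8)*α + 2 := by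
  have h := utility_sum_le (GGS n) (wGS n S α) s (wGS_nonneg hα0 hpos)
    Finset.univ Finset.univ (fun i _ v _ => Finset.mem_univ v)
  rwa [sum_wGS hsum] at h

lemma occ12 (hn : 1 ≤ n) (hpos : ∀ j, 0 < S j) (hsum : ∑ j, S j = 2*α) (hα0 : 0 ≤ α)
    (hN : isNash (GGS n) (wGS n S α) s) :
    (∃ i, s i = Sum.inl 0) ∨ (∃ i, s i = Sum.inl 1) := by
  by_contra hcon
  push_neg at hcon
  obtain ⟨h0, h1⟩ := hcon
  have key : ∀ i, 2*α + 1 ≤ utility (GGS n) (wGS n S α) s i := by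
    intro i
    set s' := Function.update s i (Sum.inl 1) with hs'
    have h1occ : s' i = Sum.inl 1 := Function.update_self i _ s
    have huniq : ∀ j, s' j = Sum.inl 1 → j = i := by
      intro j hj
      by_contra hji
      rw [hs', Function.update_of_ne hji] at hj
      exact h1 j hj
    have hfree0 : ∀ j, s' j ≠ Sum.inl 0 := by
      intro j
      rcases eq_or_ne j i with rfl | hji
      · rw [h1occ]; simp
      · rw [hs', Function.update_of_ne hji]; exact h0 j
    have hfin1 : finalLabel (GGS n) s' (Sum.inl 1) = some (some i) :=
      final_of_occ (GGS n) s' h1occ huniq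
    have hfin0 : finalLabel (GGS n) s' (Sum.inl 0) = some (some i) :=
      final_capture_one (GGS n) s' hfree0 h1occ huniq
        ((adj_a0_iff (Sum.inl 1)).mpr rfl) (fun x hx => (adj_a0_iff x).mp hx)
    have hne01 : (Sum.inl 0 : VGS n) ≠ Sum.inl 1 := by simp
    have hsum2 : ∑ v ∈ ({Sum.inl 0, Sum.inl 1} : Finset (VGS n)), wGS n S α v
        = 2*α + 1 := by
      rw [Finset.sum_pair hne01, wGS_a0, wGS_a1]
    have hle : 2*α + 1 ≤ utility (GGS n) (wGS n S α) s' i := by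
      rw [← hsum2]
      apply utility_ge (GGS n) (wGS n S α) s' (wGS_nonneg hα0 hpos)
      intro v hv
      rcases Finset.mem_insert.mp hv with rfl | hv
      · exact hfin0
      · rw [Finset.mem_singleton.mp hv]; exact hfin1
    exact hle.trans (hN i (Sum.inl 1))
  have hub := sum_U_le_total (s := s) hpos hα0 hsum
  have hlb : ∑ i : Fin (2*n+4), (2*α+1) ≤ ∑ i, utility (GGS n) (wGS n S α) s i :=
    Finset.sum_le_sum (fun i _ => key i)
  rw [Finset.sum_const, Finset.card_univ, Fintype.card_fin, nsmul_eq_mul] at hlb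
  have hexp : ((2*n+4 : ℕ) : ℤ) * (2*α+1) = (4*(n:ℤ)+8)*α + (2*(n:ℤ)+4) := by
    push_cast; ring
  rw [hexp] at hlb
  have : (2*(n:ℤ)+4) ≤ 2 := by linarith
  have hnn : (0:ℤ) ≤ (n:ℤ) := Int.natCast_nonneg n
  linarith

lemma occ23 (hn : 1 ≤ n) (hpos : ∀ j, 0 < S j) (hsum : ∑ j, S j = 2*α) (hα0 : 0 ≤ α)
    (hN : isNash (GGS n) (wGS n S α) s) :
    (∃ i, s i = Sum.inl 3) ∨ (∃ i, s i = Sum.inl 2) := by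
  by_contra hcon
  push_neg at hcon
  obtain ⟨h3, h2⟩ := hcon
  have key : ∀ i, 2*α + 1 ≤ utility (GGS n) (wGS n S α) s i := by
    intro i
    set s' := Function.update s i (Sum.inl 2) with hs'
    have h2occ : s' i = Sum.inl 2 := Function.update_self i _ s
    have huniq : ∀ j, s' j = Sum.inl 2 → j = i := by
      intro j hj
      by_contra hji
      rw [hs', Function.update_of_ne hji] at hj
      exact h2 j hj
    have hfree3 : ∀ j, s' j ≠ Sum.inl 3 := by
      intro j
      rcases eq_or_ne j i with rfl | hji
      · rw [h2occ]; simp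
      · rw [hs', Function.update_of_ne hji]; exact h3 j
    have hfin2 : finalLabel (GGS n) s' (Sum.inl 2) = some (some i) :=
      final_of_occ (GGS n) s' h2occ huniq
    have hfin3 : finalLabel (GGS n) s' (Sum.inl 3) = some (some i) :=
      final_capture_one (GGS n) s' hfree3 h2occ huniq
        ((adj_a3_iff (Sum.inl 2)).mpr rfl) (fun x hx => (adj_a3_iff x).mp hx)
    have hne : (Sum.inl 3 : VGS n) ≠ Sum.inl 2 := by simp
    have hsum2 : ∑ v ∈ ({Sum.inl 3, Sum.inl 2} : Finset (VGS n)), wGS n S α v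
        = 2*α + 1 := by
      rw [Finset.sum_pair hne, wGS_a3, wGS_a2]
    have hle : 2*α + 1 ≤ utility (GGS n) (wGS n S α) s' i := by
      rw [← hsum2]
      apply utility_ge (GGS n) (wGS n S α) s' (wGS_nonneg hα0 hpos)
      intro v hv
      rcases Finset.mem_insert.mp hv with rfl | hv
      · exact hfin3
      · rw [Finset.mem_singleton.mp hv]; exact hfin2
    exact hle.trans (hN i (Sum.inl 2))
  have hub := sum_U_le_total (s := s) hpos hα0 hsum
  have hlb : ∑ i : Fin (2*n+4), (2*α+1) ≤ ∑ i, utility (GGS n) (wGS n S α) s i :=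
    Finset.sum_le_sum (fun i _ => key i)
  rw [Finset.sum_const, Finset.card_univ, Fintype.card_fin, nsmul_eq_mul] at hlb
  have hexp : ((2*n+4 : ℕ) : ℤ) * (2*α+1) = (4*(n:ℤ)+8)*α + (2*(n:ℤ)+4) := by
    push_cast; ring
  rw [hexp] at hlb
  have hnn : (0:ℤ) ≤ (n:ℤ) := Int.natCast_nonneg n
  linarith

end Game
/- ===== The rest-of-graph analysis ===== -/

section Rest

set_option linter.unusedSectionVars false

variable {n : ℕ} {S : Fin (2*n) → ℤ} {α : ℤ} {s : Fin (2*n+4) → VGS n}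

lemma Sj_lt (hn : 1 ≤ n) (hpos : ∀ j, 0 < S j) (hsum : ∑ j, S j = 2*α)
    (j : Fin (2*n)) : S j < 2*α := by
  have h1 : ∑ j' ∈ Finset.univ.erase j, S j' + S j = ∑ j', S j' :=
    Finset.sum_erase_add _ _ (Finset.mem_univ j)
  have hne : (Finset.univ.erase j).Nonempty := by
    rw [← Finset.card_pos, Finset.card_erase_of_mem (Finset.mem_univ j)]
    simp only [Finset.card_univ, Fintype.card_fin]
    omega
  have h2 : 0 < ∑ j' ∈ Finset.univ.erase j, S j' :=
    Finset.sum_pos (fun k _ => hpos k) hne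
  rw [hsum] at h1
  linarith

lemma rest_contra (hn : 1 ≤ n) (hpos : ∀ j, 0 < S j) (hsum : ∑ j, S j = 2*α)
    (hα2 : 2 ≤ α)
    (hno : ∀ T : Finset (Fin (2*n)), ∑ j ∈ T, S j ≠ α)
    (hN : isNash (GGS n) (wGS n S α) s)
    {p q : Fin (2*n+4)} (hpq : p ≠ q)
    (hrest : ∀ i, i ≠ p → i ≠ q → (s i).isRight)
    (hge : ∀ i, i ≠ p → i ≠ q → 2*α ≤ utility (GGS n) (wGS n S α) s i)
    (hsumR : ∑ i ∈ (Finset.univ.erase p).erase q, utility (GGS n) (wGS n S α) s i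
      ≤ (4*(n:ℤ)+4)*α) : False := by
  classical
  set U : Fin (2*n+4) → ℤ := utility (GGS n) (wGS n S α) s with hU
  set R : Finset (Fin (2*n+4)) := (Finset.univ.erase p).erase q with hR
  have hmemR : ∀ i, i ∈ R ↔ (i ≠ q ∧ i ≠ p) := by
    intro i
    rw [hR, Finset.mem_erase, Finset.mem_erase]
    simp
  have hcardR : R.card = 2*n + 2 := by
    rw [hR, Finset.card_erase_of_mem, Finset.card_erase_of_mem (Finset.mem_univ p)]
    · simp only [Finset.card_univ, Fintype.card_fin]; omega
    · exact Finset.mem_erase.mpr ⟨hpq.symm, Finset.mem_univ q⟩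
  have hgeR : ∀ i ∈ R, 2*α ≤ U i := by
    intro i hi
    obtain ⟨hiq, hip⟩ := (hmemR i).mp hi
    exact hge i hip hiq
  have hrestR : ∀ i ∈ R, (s i).isRight := by
    intro i hi
    obtain ⟨hiq, hip⟩ := (hmemR i).mp hi
    exact hrest i hip hiq
  -- each rest player has utility exactly 2α
  have hU2 : ∀ i ∈ R, U i = 2*α := by
    intro i hi
    by_contra hne
    have hgt : 2*α < U i := lt_of_le_of_ne (hgeR i hi) (Ne.symm hne)
    have hlt : ∑ _j ∈ R, (2*α) < ∑ j ∈ R, U j :=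
      Finset.sum_lt_sum (fun j hj => hgeR j hj) ⟨i, hi, hgt⟩
    rw [Finset.sum_const, hcardR, nsmul_eq_mul] at hlt
    have : ((2*n+2 : ℕ) : ℤ) * (2*α) = (4*(n:ℤ)+4)*α := by push_cast; ring
    rw [this] at hlt
    omega
  have hsumR2 : ∑ i ∈ R, U i = (4*(n:ℤ)+4)*α := by
    rw [Finset.sum_congr rfl hU2, Finset.sum_const, hcardR, nsmul_eq_mul]
    push_cast; ring
  -- the captured set of the rest players
  set capR : Finset (VGS n) := R.biUnion (fun i => Finset.univ.filter
    (fun v => finalLabel (GGS n) s v = some (some i))) with hcapR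
  have hsum_cap : ∑ v ∈ capR, wGS n S α v = (4*(n:ℤ)+4)*α := by
    rw [← hsumR2, hU]
    exact (utility_sum_eq (GGS n) (wGS n S α) s R).symm
  have hDright : ∀ i ∈ R, ∀ v : VGS n,
      finalLabel (GGS n) s v = some (some i) → v.isRight := by
    intro i hi v hv
    obtain ⟨pw, -⟩ := final_trace (GGS n) s hv
    have hL := walk_isLeft pw
    have hsr := hrestR i hi
    rcases hsv : s i with x | x
    · rw [hsv] at hsr; simp at hsr
    · rw [hsv] at hL
      rcases v with y | y
      · simp at hL
      · simp
  have hcap_sub : capR ⊆ RestF n := by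
    intro v hv
    rw [hcapR, Finset.mem_biUnion] at hv
    obtain ⟨i, hi, hv⟩ := hv
    rw [Finset.mem_filter] at hv
    exact mem_RestF (hDright i hi v hv.2)
  -- the first cycle's s-vertex is captured by a rest player
  have hj0ex : ∃ j0 : Fin (2*n), True := ⟨⟨0, by omega⟩, trivial⟩
  obtain ⟨j0, -⟩ := hj0ex
  have hj0cap : (Sum.inr (Sum.inl (j0, 0)) : VGS n) ∈ capR := by
    by_contra hcon
    have hsub : capR ⊆ (RestF n).erase (Sum.inr (Sum.inl (j0, 0))) := by
      intro v hv
      exact Finset.mem_erase.mpr ⟨fun h => hcon (h ▸ hv), hcap_sub hv⟩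
    have h1 : ∑ v ∈ capR, wGS n S α v
        ≤ ∑ v ∈ (RestF n).erase (Sum.inr (Sum.inl (j0, 0))), wGS n S α v :=
      Finset.sum_le_sum_of_subset_of_nonneg hsub
        (fun v _ _ => wGS_nonneg (by omega) hpos v)
    rw [Finset.sum_erase_eq_sub (mem_RestF (by simp)), sum_RestF hsum, wGS_c0] at h1
    have := hpos j0
    omega
  rw [hcapR, Finset.mem_biUnion] at hj0cap
  obtain ⟨i, hiR, hj0D⟩ := hj0cap
  rw [Finset.mem_filter] at hj0D
  have hfin0 : finalLabel (GGS n) s (Sum.inr (Sum.inl (j0, 0))) = some (some i) := hj0D.2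
  -- decompose the utility of player i
  set D : Finset (VGS n) := Finset.univ.filter
    (fun v => finalLabel (GGS n) s v = some (some i)) with hD
  set PA : VGS n → Prop := fun v => (∃ b, v = Sum.inr (Sum.inr b)) ∨
    (∃ j, v = Sum.inr (Sum.inl (j, 2)) ∨ v = Sum.inr (Sum.inl (j, 3))) with hPA
  set Q : VGS n → Prop := fun v => ∃ j, v = Sum.inr (Sum.inl (j, 0)) with hQ
  set T : Finset (Fin (2*n)) := Finset.univ.filter
    (fun j => finalLabel (GGS n) s (Sum.inr (Sum.inl (j, 0))) = some (some i)) with hT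
  have hUi : U i = ∑ v ∈ D, wGS n S α v := rfl
  have hsplit1 : ∑ v ∈ D, wGS n S α v = ∑ v ∈ D.filter PA, wGS n S α v
      + ∑ v ∈ D.filter (fun v => ¬ PA v), wGS n S α v :=
    (Finset.sum_filter_add_sum_filter_not D PA _).symm
  have hPAval : ∑ v ∈ D.filter PA, wGS n S α v = ((D.filter PA).card : ℤ) * α := by
    rw [Finset.sum_congr rfl (fun v hv => ?_), Finset.sum_const, nsmul_eq_mul]
    obtain ⟨-, hv⟩ := Finset.mem_filter.mp hv
    rcases hv with ⟨b, rfl⟩ | ⟨j, rfl | rfl⟩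
    · exact wGS_hub b
    · exact wGS_c2 j
    · exact wGS_c3 j
  have hsplit2 : ∑ v ∈ D.filter (fun v => ¬ PA v), wGS n S α v
      = ∑ v ∈ (D.filter (fun v => ¬ PA v)).filter Q, wGS n S α v
      + ∑ v ∈ (D.filter (fun v => ¬ PA v)).filter (fun v => ¬ Q v), wGS n S α v :=
    (Finset.sum_filter_add_sum_filter_not _ Q _).symm
  have hzero : ∑ v ∈ (D.filter (fun v => ¬ PA v)).filter (fun v => ¬ Q v),
      wGS n S α v = 0 := by
    apply Finset.sum_eq_zero
    intro v hv
    obtain ⟨hv1, hnQ⟩ := Finset.mem_filter.mp hv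
    obtain ⟨hvD, hnPA⟩ := Finset.mem_filter.mp hv1
    obtain ⟨-, hfinv⟩ := Finset.mem_filter.mp hvD
    have hvr : v.isRight := hDright i hiR v hfinv
    rcases v with x | (⟨j, r⟩ | b)
    · simp at hvr
    · fin_cases r
      · exact absurd ⟨j, rfl⟩ hnQ
      · exact wGS_c1 j
      · exact absurd (Or.inr ⟨j, Or.inl rfl⟩) hnPA
      · exact absurd (Or.inr ⟨j, Or.inr rfl⟩) hnPA
      · exact wGS_c4 j
    · exact absurd (Or.inl ⟨b, rfl⟩) hnPA
  have hQT : (D.filter (fun v => ¬ PA v)).filter Q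
      = T.image (fun j => (Sum.inr (Sum.inl (j, 0)) : VGS n)) := by
    ext v
    constructor
    · intro hv
      obtain ⟨hv1, j, rfl⟩ := Finset.mem_filter.mp hv
      obtain ⟨hvD, -⟩ := Finset.mem_filter.mp hv1
      obtain ⟨-, hfinv⟩ := Finset.mem_filter.mp hvD
      exact Finset.mem_image.mpr ⟨j, Finset.mem_filter.mpr ⟨Finset.mem_univ j, hfinv⟩, rfl⟩
    · intro hv
      obtain ⟨j, hjT, rfl⟩ := Finset.mem_image.mp hv
      obtain ⟨-, hfinj⟩ := Finset.mem_filter.mp hjT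
      refine Finset.mem_filter.mpr ⟨Finset.mem_filter.mpr
        ⟨Finset.mem_filter.mpr ⟨Finset.mem_univ _, hfinj⟩, ?_⟩, ⟨j, rfl⟩⟩
      rintro (⟨b, hb⟩ | ⟨j', hj' | hj'⟩) <;> simp_all
  have hTsum : ∑ v ∈ T.image (fun j => (Sum.inr (Sum.inl (j, 0)) : VGS n)),
      wGS n S α v = ∑ j ∈ T, S j := by
    rw [Finset.sum_image (by intro x _ y _ h; simpa using h)]
    exact Finset.sum_congr rfl (fun j _ => wGS_c0 j)
  have hdec : U i = ((D.filter PA).card : ℤ) * α + ∑ j ∈ T, S j := by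
    rw [hUi, hsplit1, hPAval, hsplit2, hzero, hQT, hTsum]; ring
  have hUival : U i = 2*α := hU2 i hiR
  have hj0T : j0 ∈ T := Finset.mem_filter.mpr ⟨Finset.mem_univ j0, hfin0⟩
  have hxpos : 0 < ∑ j ∈ T, S j :=
    lt_of_lt_of_le (hpos j0) (Finset.single_le_sum (fun j _ => (hpos j).le) hj0T)
  -- card of the α-vertices captured is 0 or 1
  have hclt : (D.filter PA).card < 2 := by
    by_contra hge2
    push_neg at hge2
    have h2 : (2:ℤ) ≤ ((D.filter PA).card : ℤ) := by exact_mod_cast hge2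
    have : 2*α ≤ ((D.filter PA).card : ℤ) * α :=
      mul_le_mul_of_nonneg_right h2 (by omega)
    omega
  interval_cases hcval : (D.filter PA).card
  · -- no α-vertex captured: player i spans two cycles without a hub
    have hAempty : D.filter PA = ∅ := Finset.card_eq_zero.mp hcval
    have hxval : ∑ j ∈ T, S j = 2*α := by
      rw [hdec] at hUival
      push_cast at hUival
      linarith
    have hT2 : 1 < T.card := by
      rcases Nat.lt_or_ge T.card 2 with hlt | hge
      · exfalso
        interval_cases hTc : T.card
        · rw [Finset.card_eq_zero.mp hTc] at hxval
          simp at hxval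
          omega
        · obtain ⟨j1, hj1⟩ := Finset.card_eq_one.mp hTc
          rw [hj1, Finset.sum_singleton] at hxval
          exact absurd hxval (ne_of_lt (Sj_lt hn hpos hsum j1))
      · omega
    obtain ⟨j1, hj1, j2, hj2, hj12⟩ := Finset.one_lt_card.mp hT2
    have hfin1 : finalLabel (GGS n) s (Sum.inr (Sum.inl (j1, 0))) = some (some i) :=
      (Finset.mem_filter.mp hj1).2
    have hfin2 : finalLabel (GGS n) s (Sum.inr (Sum.inl (j2, 0))) = some (some i) :=
      (Finset.mem_filter.mp hj2).2
    obtain ⟨p1, hp1⟩ := final_trace (GGS n) s hfin1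
    obtain ⟨p2, hp2⟩ := final_trace (GGS n) s hfin2
    set W := p1.reverse.append p2 with hW
    have hcut := cyc_cut W ⟨0, rfl⟩ (by
      intro r h
      rw [Sum.inr.injEq, Sum.inl.injEq, Prod.mk.injEq] at h
      exact hj12 (h.1.symm ▸ rfl))
    obtain ⟨h, hhsup, hhub⟩ := hcut
    have hhdom : finalLabel (GGS n) s h = some (some i) := by
      rw [hW, SimpleGraph.Walk.mem_support_append_iff] at hhsup
      rcases hhsup with hh | hh
      · exact hp1 h (by rwa [SimpleGraph.Walk.support_reverse, List.mem_reverse] at hh)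
      · exact hp2 h hh
    have hhD : h ∈ D.filter PA := by
      refine Finset.mem_filter.mpr ⟨Finset.mem_filter.mpr ⟨Finset.mem_univ h, hhdom⟩, ?_⟩
      rcases hhub with rfl | rfl
      · exact Or.inl ⟨false, rfl⟩
      · exact Or.inl ⟨true, rfl⟩
    rw [hAempty] at hhD
    exact absurd hhD (Finset.notMem_empty h)
  · -- exactly one α-vertex: the subset T gives the partition
    apply hno T
    rw [hdec] at hUival
    push_cast at hUival
    linarith

end Rest
/-- if the competitive diffusion game `(2n+4, G_S, w_S)` has a pure
Nash equilibrium, then the positive integers `s_1, …, s_{2n}` (of total sum `2α`)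
can be partitioned into two halves each of sum `α`. -/
theorem GS_nash_to_partition (n : ℕ) (S : Fin (2 * n) → ℤ) (α : ℤ)
    (hpos : ∀ j, 0 < S j) (hsum : ∑ j, S j = 2 * α)
    (hnash : ∃ s : Fin (2 * n + 4) → VGS n, isNash (GGS n) (wGS n S α) s) :
    ∃ S' : Finset (Fin (2 * n)), ∑ j ∈ S', S j = α ∧ ∑ j ∈ S'ᶜ, S j = α := by
  classical
  -- the trivial case n = 0
  rcases Nat.eq_zero_or_pos n with rfl | hn
  · have hα0 : α = 0 := by simpa using hsum.symm
    refine ⟨∅, by simp [hα0], ?_⟩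
    rw [Finset.compl_empty]
    rw [hsum, hα0]; ring
  -- reduce to contradiction from "no half-sum subset"
  by_contra hcon
  have hno : ∀ T : Finset (Fin (2*n)), ∑ j ∈ T, S j ≠ α := by
    intro T hT
    apply hcon
    refine ⟨T, hT, ?_⟩
    have := Finset.sum_add_sum_compl T S
    rw [hsum, hT] at this
    linarith
  have hnZ : (1:ℤ) ≤ (n:ℤ) := by exact_mod_cast hn
  have hαn : (n:ℤ) ≤ α := by
    have h1 : (Finset.univ : Finset (Fin (2*n))).card • (1:ℤ) ≤ ∑ j, S j :=
      Finset.card_nsmul_le_sum _ _ _ (fun j _ => hpos j)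
    rw [Finset.card_univ, Fintype.card_fin, nsmul_eq_mul, hsum] at h1
    push_cast at h1
    linarith
  have hα2 : 2 ≤ α := by
    by_contra hlt
    push_neg at hlt
    have hα1 : α = 1 := by omega
    set j0 : Fin (2*n) := ⟨0, by omega⟩ with hj0
    have hS0 := Sj_lt hn hpos hsum j0
    have := hpos j0
    exact hno {j0} (by rw [Finset.sum_singleton]; omega)
  obtain ⟨s, hN⟩ := hnash
  have hα0 : (0:ℤ) ≤ α := by omega
  have hw0 : ∀ v, 0 ≤ wGS n S α v := wGS_nonneg hα0 hpos
  have hInj : Function.Injective s := s_inj hn hpos hα2 hN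
  have huq : ∀ {x : VGS n} {p : Fin (2*n+4)}, s p = x → ∀ j, s j = x → j = p :=
    fun hp j hj => hInj (hj.trans hp.symm)
  have hUα : ∀ i, α ≤ utility (GGS n) (wGS n S α) s i := U_ge_alpha hn hpos hα0 hN
  have hcard2 : 2 ≤ Fintype.card (VGS n) := by rw [card_VGS]; omega
  -- helper: all captured vertices of a path player are path vertices
  have hleft : ∀ (i : Fin (2*n+4)) (t : Fin 4), s i = Sum.inl t →
      ∀ v : VGS n, finalLabel (GGS n) s v = some (some i) → ∃ t' : Fin 4, v = Sum.inl t' := by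
    intro i t hst v hv
    obtain ⟨pw, -⟩ := final_trace (GGS n) s hv
    have hL := walk_isLeft pw
    rw [hst] at hL
    rcases v with t' | x
    · exact ⟨t', rfl⟩
    · simp at hL
  by_cases h1 : ∃ i, s i = Sum.inl 0 <;> by_cases h4 : ∃ i, s i = Sum.inl 3
  · -- CASE A : a₁ and a₄ both occupied
    obtain ⟨p, hp⟩ := h1
    obtain ⟨q, hq⟩ := h4
    have hpq : p ≠ q := by
      intro h; rw [h, hq] at hp; simp at hp
    have hfinal0 : finalLabel (GGS n) s (Sum.inl 0) = some (some p) :=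
      final_of_occ _ s hp (huq hp)
    have hfinal3 : finalLabel (GGS n) s (Sum.inl 3) = some (some q) :=
      final_of_occ _ s hq (huq hq)
    by_cases h2 : ∃ i, s i = Sum.inl 1
    · -- A1 : a₂ occupied by a trapped player r
      obtain ⟨r, hr⟩ := h2
      have hrp : r ≠ p := by intro h; rw [h, hp] at hr; simp at hr
      have hrq : r ≠ q := by intro h; rw [h, hq] at hr; simp at hr
      have hfinal1 : finalLabel (GGS n) s (Sum.inl 1) = some (some r) :=
        final_of_occ _ s hr (huq hr)
      have hfin2ne : ∀ x, finalLabel (GGS n) s (Sum.inl 2) = x → x ≠ some (some r) := by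
        intro x hx
        by_cases h3 : ∃ i, s i = Sum.inl 2
        · obtain ⟨r', hr'⟩ := h3
          have : r' ≠ r := by intro h; rw [h, hr] at hr'; simp at hr'
          have h2' : finalLabel (GGS n) s (Sum.inl 2) = some (some r') :=
            final_of_occ _ s hr' (huq hr')
          rw [hx] at h2'
          subst h2'
          simp [this]
        · have hfree2 : ∀ j, s j ≠ Sum.inl 2 := fun j hj => h3 ⟨j, hj⟩
          have h2' : finalLabel (GGS n) s (Sum.inl 2) = some none :=
            final_neutral_two _ s hfree2
              ((adj_a2_iff (Sum.inl 1)).mpr (Or.inl rfl))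
              ((adj_a2_iff (Sum.inl 3)).mpr (Or.inr rfl))
              hr (huq hr) hq (huq hq) hrq
          rw [hx] at h2'
          subst h2'
          simp
      have hUb : utility (GGS n) (wGS n S α) s r ≤ 1 := by
        have := utility_le (GGS n) (wGS n S α) s hw0 (i := r) ({Sum.inl 1} : Finset (VGS n)) ?_
        · rwa [Finset.sum_singleton, wGS_a1] at this
        · intro v hv
          obtain ⟨t, rfl⟩ := hleft r 1 hr v hv
          fin_cases t
          · exact absurd ((hfinal0.symm.trans hv)) (by simp [hrp.symm])
          · exact Finset.mem_singleton_self _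
          · exact absurd rfl (hfin2ne _ hv)
          · exact absurd ((hfinal3.symm.trans hv)) (by simp [hrq.symm])
      have := hUα r
      omega
    · by_cases h3 : ∃ i, s i = Sum.inl 2
      · -- A2 : a₃ occupied by a trapped player r
        obtain ⟨r, hr⟩ := h3
        have hrp : r ≠ p := by intro h; rw [h, hp] at hr; simp at hr
        have hrq : r ≠ q := by intro h; rw [h, hq] at hr; simp at hr
        have hfree1 : ∀ j, s j ≠ Sum.inl 1 := fun j hj => h2 ⟨j, hj⟩
        have hfin1 : finalLabel (GGS n) s (Sum.inl 1) = some none :=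
          final_neutral_two _ s hfree1
            ((adj_a1_iff (Sum.inl 0)).mpr (Or.inl rfl))
            ((adj_a1_iff (Sum.inl 2)).mpr (Or.inr rfl))
            hp (huq hp) hr (huq hr) hrp.symm
        have hfinal2 : finalLabel (GGS n) s (Sum.inl 2) = some (some r) :=
          final_of_occ _ s hr (huq hr)
        have hUb : utility (GGS n) (wGS n S α) s r ≤ 1 := by
          have := utility_le (GGS n) (wGS n S α) s hw0 (i := r) ({Sum.inl 2} : Finset (VGS n)) ?_
          · rwa [Finset.sum_singleton, wGS_a2] at this
          · intro v hv
            obtain ⟨t, rfl⟩ := hleft r 2 hr v hv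
            fin_cases t
            · exact absurd ((hfinal0.symm.trans hv)) (by simp [hrp.symm])
            · exact absurd ((hfin1.symm.trans hv)) (by simp)
            · exact Finset.mem_singleton_self _
            · exact absurd ((hfinal3.symm.trans hv)) (by simp [hrq.symm])
        have := hUα r
        omega
      · -- A3 : a₂, a₃ free; p should deviate from a₁ to a₃
        have hfree1 : ∀ j, s j ≠ Sum.inl 1 := fun j hj => h2 ⟨j, hj⟩
        have hfree2 : ∀ j, s j ≠ Sum.inl 2 := fun j hj => h3 ⟨j, hj⟩
        have hfinal2 : finalLabel (GGS n) s (Sum.inl 2) = some (some q) :=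
          final_capture_two _ s hfree2 hq (huq hq)
            ((adj_a2_iff (Sum.inl 3)).mpr (Or.inr rfl))
            (fun x hx => ((adj_a2_iff x).mp hx).symm) hfree1
        -- upper bound for p's utility
        have hUb : utility (GGS n) (wGS n S α) s p ≤ 2*α + 1 := by
          have := utility_le (GGS n) (wGS n S α) s hw0 (i := p)
            ({Sum.inl 0, Sum.inl 1} : Finset (VGS n)) ?_
          · rwa [Finset.sum_pair (by simp), wGS_a0, wGS_a1] at this
          · intro v hv
            obtain ⟨t, rfl⟩ := hleft p 0 hp v hv
            fin_cases t
            · exact Finset.mem_insert_self _ _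
            · exact Finset.mem_insert_of_mem (Finset.mem_singleton_self _)
            · exact absurd ((hfinal2.symm.trans hv)) (by simp [Ne.symm hpq])
            · exact absurd ((hfinal3.symm.trans hv)) (by simp [Ne.symm hpq])
        -- the deviation
        set s' := Function.update s p (Sum.inl 2) with hs'
        have hs'p : s' p = Sum.inl 2 := Function.update_self p _ s
        have hs'j : ∀ j, j ≠ p → s' j = s j := fun j hj => Function.update_of_ne hj _ s
        have huq' : ∀ j, s' j = Sum.inl 2 → j = p := by
          intro j hj
          by_contra hjp
          rw [hs'j j hjp] at hj
          exact hfree2 j hj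
        have hfree0' : ∀ j, s' j ≠ Sum.inl 0 := by
          intro j
          rcases eq_or_ne j p with rfl | hjp
          · rw [hs'p]; simp
          · rw [hs'j j hjp]
            intro hj
            exact hjp (hInj (hj.trans hp.symm))
        have hfree1' : ∀ j, s' j ≠ Sum.inl 1 := by
          intro j
          rcases eq_or_ne j p with rfl | hjp
          · rw [hs'p]; simp
          · rw [hs'j j hjp]; exact hfree1 j
        have hL0_2 : labelAt (GGS n) s' 0 (Sum.inl 2) = some (some p) :=
          initLabel_of_unique s' hs'p huq'
        have hL0_1 : labelAt (GGS n) s' 0 (Sum.inl 1) = none :=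
          initLabel_of_none s' hfree1'
        have hL0_0 : labelAt (GGS n) s' 0 (Sum.inl 0) = none :=
          initLabel_of_none s' hfree0'
        have hL1_1 : labelAt (GGS n) s' 1 (Sum.inl 1) = some (some p) := by
          rw [labelAt_succ]
          refine stepLabel_of_dom _ hL0_1 ((adj_a1_iff (Sum.inl 2)).mpr (Or.inr rfl))
            hL0_2 ?_
          intro i' u' hadj hu'
          rcases (adj_a1_iff u').mp hadj with rfl | rfl
          · rw [hL0_0] at hu'; exact absurd hu' (by simp)
          · exact huq' i' (initLabel_inv s' hu')
        have hL1_0 : labelAt (GGS n) s' 1 (Sum.inl 0) = none := by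
          rw [labelAt_succ]
          refine stepLabel_of_isolated _ hL0_0 ?_
          intro i u hadj
          rw [(adj_a0_iff u).mp hadj, hL0_1]
          simp
        have hL2_0 : labelAt (GGS n) s' 2 (Sum.inl 0) = some (some p) := by
          rw [labelAt_succ]
          refine stepLabel_of_dom _ hL1_0 ((adj_a0_iff (Sum.inl 1)).mpr rfl) hL1_1 ?_
          intro i' u' hadj hu'
          rw [(adj_a0_iff u').mp hadj, hL1_1] at hu'
          simpa using hu'.symm
        have hfin0' : finalLabel (GGS n) s' (Sum.inl 0) = some (some p) :=
          finalLabel_of_labelAt _ s' hcard2 hL2_0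
        have hfin1' : finalLabel (GGS n) s' (Sum.inl 1) = some (some p) :=
          finalLabel_of_labelAt _ s' (by omega) hL1_1
        have hfin2' : finalLabel (GGS n) s' (Sum.inl 2) = some (some p) :=
          finalLabel_of_labelAt _ s' (by omega) hL0_2
        have hdev : 2*α + 2 ≤ utility (GGS n) (wGS n S α) s' p := by
          have hEsum : ∑ v ∈ ({Sum.inl 0, Sum.inl 1, Sum.inl 2} : Finset (VGS n)),
              wGS n S α v = 2*α + 2 := by
            rw [show ({Sum.inl 0, Sum.inl 1, Sum.inl 2} : Finset (VGS n))
              = insert (Sum.inl 0) {Sum.inl 1, Sum.inl 2} from rfl]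
            rw [Finset.sum_insert (by simp), Finset.sum_pair (by simp), wGS_a0,
              wGS_a1, wGS_a2]
            ring
          rw [← hEsum]
          apply utility_ge (GGS n) (wGS n S α) s' hw0
          intro v hv
          simp only [Finset.mem_insert, Finset.mem_singleton] at hv
          rcases hv with rfl | rfl | rfl
          · exact hfin0'
          · exact hfin1'
          · exact hfin2'
        have := hN p (Sum.inl 2)
        rw [← hs'] at this
        omega
  · -- CASE B : a₁ occupied, a₄ free (hence a₃ occupied)
    obtain ⟨p, hp⟩ := h1
    have hq' := occ23 hn hpos hsum hα0 hN
    rcases hq' with hq' | hq'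
    · exact absurd hq' h4
    obtain ⟨q, hq⟩ := hq'
    have hpq : p ≠ q := by intro h; rw [h, hq] at hp; simp at hp
    have hfree3 : ∀ j, s j ≠ Sum.inl 3 := fun j hj => h4 ⟨j, hj⟩
    have hfinal0 : finalLabel (GGS n) s (Sum.inl 0) = some (some p) :=
      final_of_occ _ s hp (huq hp)
    have hfinal2 : finalLabel (GGS n) s (Sum.inl 2) = some (some q) :=
      final_of_occ _ s hq (huq hq)
    have hfinal3 : finalLabel (GGS n) s (Sum.inl 3) = some (some q) :=
      final_capture_one _ s hfree3 hq (huq hq)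
        ((adj_a3_iff (Sum.inl 2)).mpr rfl) (fun x hx => (adj_a3_iff x).mp hx)
    have hge : ∀ i, 2*α ≤ utility (GGS n) (wGS n S α) s i := by
      intro i
      have := nash_dev_ge (GGS n) (wGS n S α) s hN hw0 i (Sum.inl 3)
        (fun j _ => hfree3 j)
      rwa [wGS_a3] at this
    by_cases h2 : ∃ i, s i = Sum.inl 1
    · -- B1 : a₂ occupied by a trapped player
      obtain ⟨r, hr⟩ := h2
      have hrp : r ≠ p := by intro h; rw [h, hp] at hr; simp at hr
      have hrq : r ≠ q := by intro h; rw [h, hq] at hr; simp at hr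
      have hUb : utility (GGS n) (wGS n S α) s r ≤ 1 := by
        have := utility_le (GGS n) (wGS n S α) s hw0 (i := r) ({Sum.inl 1} : Finset (VGS n)) ?_
        · rwa [Finset.sum_singleton, wGS_a1] at this
        · intro v hv
          obtain ⟨t, rfl⟩ := hleft r 1 hr v hv
          fin_cases t
          · exact absurd ((hfinal0.symm.trans hv)) (by simp [hrp.symm])
          · exact Finset.mem_singleton_self _
          · exact absurd ((hfinal2.symm.trans hv)) (by simp [hrq.symm])
          · exact absurd ((hfinal3.symm.trans hv)) (by simp [hrq.symm])
      have := hUα r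
      omega
    · -- B2 : rest analysis
      have hfree1 : ∀ j, s j ≠ Sum.inl 1 := fun j hj => h2 ⟨j, hj⟩
      have hfin1 : finalLabel (GGS n) s (Sum.inl 1) = some none :=
        final_neutral_two _ s hfree1
          ((adj_a1_iff (Sum.inl 0)).mpr (Or.inl rfl))
          ((adj_a1_iff (Sum.inl 2)).mpr (Or.inr rfl))
          hp (huq hp) hq (huq hq) hpq
      have hrest : ∀ i, i ≠ p → i ≠ q → (s i).isRight := by
        intro i hip hiq
        rcases hsi : s i with t | x
        · exfalso
          fin_cases t
          · exact hip (hInj (hsi.trans hp.symm))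
          · exact hfree1 i hsi
          · exact hiq (hInj (hsi.trans hq.symm))
          · exact hfree3 i hsi
        · rfl
      have hsumtot : ∑ i, utility (GGS n) (wGS n S α) s i ≤ (4*(n:ℤ)+8)*α + 1 := by
        have hT : ∀ (i : Fin (2*n+4)) (v : VGS n),
            finalLabel (GGS n) s v = some (some i) →
            v ∈ Finset.univ.erase (Sum.inl 1 : VGS n) := by
          intro i v hv
          refine Finset.mem_erase.mpr ⟨?_, Finset.mem_univ v⟩
          intro hveq
          rw [hveq, hfin1] at hv
          simp at hv
        have := utility_sum_le (GGS n) (wGS n S α) s hw0 Finset.univ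
          (Finset.univ.erase (Sum.inl 1)) (fun i _ => hT i)
        rw [Finset.sum_erase_eq_sub (Finset.mem_univ _), sum_wGS hsum, wGS_a1] at this
        linarith
      have hUq : 2*α + 1 ≤ utility (GGS n) (wGS n S α) s q := by
        have hEsum : ∑ v ∈ ({Sum.inl 2, Sum.inl 3} : Finset (VGS n)), wGS n S α v
            = 2*α + 1 := by
          rw [Finset.sum_pair (by simp), wGS_a2, wGS_a3]; ring
        rw [← hEsum]
        apply utility_ge (GGS n) (wGS n S α) s hw0
        intro v hv
        rcases Finset.mem_insert.mp hv with rfl | hv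
        · exact hfinal2
        · rw [Finset.mem_singleton.mp hv]; exact hfinal3
      have hsplit : ∑ i ∈ (Finset.univ.erase p).erase q,
          utility (GGS n) (wGS n S α) s i ≤ (4*(n:ℤ)+4)*α := by
        have e1 : ∑ i ∈ Finset.univ.erase p, utility (GGS n) (wGS n S α) s i
            + utility (GGS n) (wGS n S α) s p = ∑ i, utility (GGS n) (wGS n S α) s i :=
          Finset.sum_erase_add _ _ (Finset.mem_univ p)
        have e2 : ∑ i ∈ (Finset.univ.erase p).erase q, utility (GGS n) (wGS n S α) s i
            + utility (GGS n) (wGS n S α) s q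
            = ∑ i ∈ Finset.univ.erase p, utility (GGS n) (wGS n S α) s i :=
          Finset.sum_erase_add _ _ (Finset.mem_erase.mpr ⟨hpq.symm, Finset.mem_univ q⟩)
        have hUp := hge p
        linarith
      exact rest_contra hn hpos hsum hα2 hno hN hpq hrest
        (fun i hip hiq => hge i) hsplit
  · -- CASE C : a₁ free (hence a₂ occupied), a₄ occupied
    obtain ⟨q, hq⟩ := h4
    have hp' := occ12 hn hpos hsum hα0 hN
    rcases hp' with hp' | hp'
    · exact absurd hp' h1
    obtain ⟨p, hp⟩ := hp'
    have hpq : p ≠ q := by intro h; rw [h, hq] at hp; simp at hp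
    have hfree0 : ∀ j, s j ≠ Sum.inl 0 := fun j hj => h1 ⟨j, hj⟩
    have hfinal1 : finalLabel (GGS n) s (Sum.inl 1) = some (some p) :=
      final_of_occ _ s hp (huq hp)
    have hfinal3 : finalLabel (GGS n) s (Sum.inl 3) = some (some q) :=
      final_of_occ _ s hq (huq hq)
    have hfinal0 : finalLabel (GGS n) s (Sum.inl 0) = some (some p) :=
      final_capture_one _ s hfree0 hp (huq hp)
        ((adj_a0_iff (Sum.inl 1)).mpr rfl) (fun x hx => (adj_a0_iff x).mp hx)
    have hge : ∀ i, 2*α ≤ utility (GGS n) (wGS n S α) s i := by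
      intro i
      have := nash_dev_ge (GGS n) (wGS n S α) s hN hw0 i (Sum.inl 0)
        (fun j _ => hfree0 j)
      rwa [wGS_a0] at this
    by_cases h3 : ∃ i, s i = Sum.inl 2
    · -- C1 : a₃ occupied by a trapped player
      obtain ⟨r, hr⟩ := h3
      have hrp : r ≠ p := by intro h; rw [h, hp] at hr; simp at hr
      have hrq : r ≠ q := by intro h; rw [h, hq] at hr; simp at hr
      have hUb : utility (GGS n) (wGS n S α) s r ≤ 1 := by
        have := utility_le (GGS n) (wGS n S α) s hw0 (i := r) ({Sum.inl 2} : Finset (VGS n)) ?_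
        · rwa [Finset.sum_singleton, wGS_a2] at this
        · intro v hv
          obtain ⟨t, rfl⟩ := hleft r 2 hr v hv
          fin_cases t
          · exact absurd ((hfinal0.symm.trans hv)) (by simp [hrp.symm])
          · exact absurd ((hfinal1.symm.trans hv)) (by simp [hrp.symm])
          · exact Finset.mem_singleton_self _
          · exact absurd ((hfinal3.symm.trans hv)) (by simp [hrq.symm])
      have := hUα r
      omega
    · -- C2 : rest analysis
      have hfree2 : ∀ j, s j ≠ Sum.inl 2 := fun j hj => h3 ⟨j, hj⟩
      have hfin2 : finalLabel (GGS n) s (Sum.inl 2) = some none :=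
        final_neutral_two _ s hfree2
          ((adj_a2_iff (Sum.inl 1)).mpr (Or.inl rfl))
          ((adj_a2_iff (Sum.inl 3)).mpr (Or.inr rfl))
          hp (huq hp) hq (huq hq) hpq
      have hrest : ∀ i, i ≠ p → i ≠ q → (s i).isRight := by
        intro i hip hiq
        rcases hsi : s i with t | x
        · exfalso
          fin_cases t
          · exact hfree0 i hsi
          · exact hip (hInj (hsi.trans hp.symm))
          · exact hfree2 i hsi
          · exact hiq (hInj (hsi.trans hq.symm))
        · rfl
      have hsumtot : ∑ i, utility (GGS n) (wGS n S α) s i ≤ (4*(n:ℤ)+8)*α + 1 := by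
        have hT : ∀ (i : Fin (2*n+4)) (v : VGS n),
            finalLabel (GGS n) s v = some (some i) →
            v ∈ Finset.univ.erase (Sum.inl 2 : VGS n) := by
          intro i v hv
          refine Finset.mem_erase.mpr ⟨?_, Finset.mem_univ v⟩
          intro hveq
          rw [hveq, hfin2] at hv
          simp at hv
        have := utility_sum_le (GGS n) (wGS n S α) s hw0 Finset.univ
          (Finset.univ.erase (Sum.inl 2)) (fun i _ => hT i)
        rw [Finset.sum_erase_eq_sub (Finset.mem_univ _), sum_wGS hsum, wGS_a2] at this
        linarith
      have hUp : 2*α + 1 ≤ utility (GGS n) (wGS n S α) s p := by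
        have hEsum : ∑ v ∈ ({Sum.inl 0, Sum.inl 1} : Finset (VGS n)), wGS n S α v
            = 2*α + 1 := by
          rw [Finset.sum_pair (by simp), wGS_a0, wGS_a1]
        rw [← hEsum]
        apply utility_ge (GGS n) (wGS n S α) s hw0
        intro v hv
        rcases Finset.mem_insert.mp hv with rfl | hv
        · exact hfinal0
        · rw [Finset.mem_singleton.mp hv]; exact hfinal1
      have hsplit : ∑ i ∈ (Finset.univ.erase p).erase q,
          utility (GGS n) (wGS n S α) s i ≤ (4*(n:ℤ)+4)*α := by
        have e1 : ∑ i ∈ Finset.univ.erase p, utility (GGS n) (wGS n S α) s i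
            + utility (GGS n) (wGS n S α) s p = ∑ i, utility (GGS n) (wGS n S α) s i :=
          Finset.sum_erase_add _ _ (Finset.mem_univ p)
        have e2 : ∑ i ∈ (Finset.univ.erase p).erase q, utility (GGS n) (wGS n S α) s i
            + utility (GGS n) (wGS n S α) s q
            = ∑ i ∈ Finset.univ.erase p, utility (GGS n) (wGS n S α) s i :=
          Finset.sum_erase_add _ _ (Finset.mem_erase.mpr ⟨hpq.symm, Finset.mem_univ q⟩)
        have hUq := hge q
        linarith
      exact rest_contra hn hpos hsum hα2 hno hN hpq hrest
        (fun i hip hiq => hge i) hsplit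
  · -- CASE D : a₁, a₄ free (hence a₂, a₃ occupied)
    have hp' := occ12 hn hpos hsum hα0 hN
    rcases hp' with hp' | hp'
    · exact absurd hp' h1
    obtain ⟨p, hp⟩ := hp'
    have hq' := occ23 hn hpos hsum hα0 hN
    rcases hq' with hq' | hq'
    · exact absurd hq' h4
    obtain ⟨q, hq⟩ := hq'
    have hpq : p ≠ q := by intro h; rw [h, hq] at hp; simp at hp
    have hfree0 : ∀ j, s j ≠ Sum.inl 0 := fun j hj => h1 ⟨j, hj⟩
    have hfree3 : ∀ j, s j ≠ Sum.inl 3 := fun j hj => h4 ⟨j, hj⟩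
    have hfinal1 : finalLabel (GGS n) s (Sum.inl 1) = some (some p) :=
      final_of_occ _ s hp (huq hp)
    have hfinal2 : finalLabel (GGS n) s (Sum.inl 2) = some (some q) :=
      final_of_occ _ s hq (huq hq)
    have hfinal0 : finalLabel (GGS n) s (Sum.inl 0) = some (some p) :=
      final_capture_one _ s hfree0 hp (huq hp)
        ((adj_a0_iff (Sum.inl 1)).mpr rfl) (fun x hx => (adj_a0_iff x).mp hx)
    have hfinal3 : finalLabel (GGS n) s (Sum.inl 3) = some (some q) :=
      final_capture_one _ s hfree3 hq (huq hq)
        ((adj_a3_iff (Sum.inl 2)).mpr rfl) (fun x hx => (adj_a3_iff x).mp hx)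
    have hge : ∀ i, 2*α ≤ utility (GGS n) (wGS n S α) s i := by
      intro i
      have := nash_dev_ge (GGS n) (wGS n S α) s hN hw0 i (Sum.inl 0)
        (fun j _ => hfree0 j)
      rwa [wGS_a0] at this
    have hrest : ∀ i, i ≠ p → i ≠ q → (s i).isRight := by
      intro i hip hiq
      rcases hsi : s i with t | x
      · exfalso
        fin_cases t
        · exact hfree0 i hsi
        · exact hip (hInj (hsi.trans hp.symm))
        · exact hiq (hInj (hsi.trans hq.symm))
        · exact hfree3 i hsi
      · rfl
    have hsumtot : ∑ i, utility (GGS n) (wGS n S α) s i ≤ (4*(n:ℤ)+8)*α + 2 :=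
      sum_U_le_total hpos hα0 hsum
    have hUp : 2*α + 1 ≤ utility (GGS n) (wGS n S α) s p := by
      have hEsum : ∑ v ∈ ({Sum.inl 0, Sum.inl 1} : Finset (VGS n)), wGS n S α v
          = 2*α + 1 := by
        rw [Finset.sum_pair (by simp), wGS_a0, wGS_a1]
      rw [← hEsum]
      apply utility_ge (GGS n) (wGS n S α) s hw0
      intro v hv
      rcases Finset.mem_insert.mp hv with rfl | hv
      · exact hfinal0
      · rw [Finset.mem_singleton.mp hv]; exact hfinal1
    have hUq : 2*α + 1 ≤ utility (GGS n) (wGS n S α) s q := by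
      have hEsum : ∑ v ∈ ({Sum.inl 2, Sum.inl 3} : Finset (VGS n)), wGS n S α v
          = 2*α + 1 := by
        rw [Finset.sum_pair (by simp), wGS_a2, wGS_a3]; ring
      rw [← hEsum]
      apply utility_ge (GGS n) (wGS n S α) s hw0
      intro v hv
      rcases Finset.mem_insert.mp hv with rfl | hv
      · exact hfinal2
      · rw [Finset.mem_singleton.mp hv]; exact hfinal3
    have hsplit : ∑ i ∈ (Finset.univ.erase p).erase q,
        utility (GGS n) (wGS n S α) s i ≤ (4*(n:ℤ)+4)*α := by
      have e1 : ∑ i ∈ Finset.univ.erase p, utility (GGS n) (wGS n S α) s i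
          + utility (GGS n) (wGS n S α) s p = ∑ i, utility (GGS n) (wGS n S α) s i :=
        Finset.sum_erase_add _ _ (Finset.mem_univ p)
      have e2 : ∑ i ∈ (Finset.univ.erase p).erase q, utility (GGS n) (wGS n S α) s i
          + utility (GGS n) (wGS n S α) s q
          = ∑ i ∈ Finset.univ.erase p, utility (GGS n) (wGS n S α) s i :=
        Finset.sum_erase_add _ _ (Finset.mem_erase.mpr ⟨hpq.symm, Finset.mem_univ q⟩)
      linarith
    exact rest_contra hn hpos hsum hα2 hno hN hpq hrest
      (fun i hip hiq => hge i) hsplit
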